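/- Let F : ℝ → ℝ satisfy ∫_ℝ |F(ξ)|/(ξ²+1) dξ ≤ c₂ < ∞ and suppose F is Lipschitz at 0: there exist c₁, δ > 0 with |F(ξ) - F(0)| ≤ c₁|ξ| for |ξ| < δ. Then there exist C, r₀ > 0 depending only on c₁, c₂, δ, and F(0) such that for all r ≥ r₀, |∫_{-∞}^{∞} F(ξ)σ(rξ) dξ - ∫_0^{∞} F(ξ) dξ| ≤ C r^{-2}. -/

import Mathlib

open MeasureTheory Set Real

noncomputable def sigmaF (x : ℝ) : ℝ := 1 / (1 + Real.exp (-x))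

noncomputable def stepF (x : ℝ) : ℝ := if 0 < x then 1 else 0

lemma stepF_mul (F : ℝ → ℝ) : (fun x => F x * stepF x) = (Set.Ioi (0:ℝ)).indicator F := by
  funext x
  by_cases hx : 0 < x <;> simp [stepF, Set.indicator, hx]

lemma sigmaF_abs_le (x : ℝ) : |sigmaF x - stepF x| ≤ Real.exp (-|x|) := by
  have hpos : (0:ℝ) < 1 + Real.exp (-x) := by positivity
  by_cases hx : 0 < x
  · have : sigmaF x - stepF x = -(Real.exp (-x) / (1 + Real.exp (-x))) := by
      simp only [sigmaF, stepF, if_pos hx]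
      field_simp
      ring
    rw [this, abs_neg, abs_of_nonneg (by positivity), abs_of_pos hx]
    rw [div_le_iff₀ hpos]
    nlinarith [Real.exp_pos (-x)]
  · have hxle : x ≤ 0 := le_of_not_gt hx
    have : sigmaF x - stepF x = 1 / (1 + Real.exp (-x)) := by
      simp [sigmaF, stepF, hx]
    rw [this, abs_of_nonneg (by positivity), abs_of_nonpos hxle, neg_neg]
    rw [div_le_iff₀ hpos, Real.exp_neg]
    have h := Real.exp_pos x
    rw [mul_add, mul_inv_cancel₀ h.ne']
    linarith

lemma stepF_neg {x : ℝ} (hx : x ≠ 0) : stepF (-x) = 1 - stepF x := by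
  rcases lt_or_gt_of_ne hx with h | h
  · simp [stepF, h, neg_pos, not_lt.mpr h.le]
  · simp [stepF, h, not_lt.mpr (neg_nonpos.mpr h.le)]

lemma sigmaF_neg (x : ℝ) : sigmaF (-x) = 1 - sigmaF x := by
  have h1 : (0:ℝ) < 1 + Real.exp (-x) := by positivity
  have h2 : (0:ℝ) < 1 + Real.exp x := by positivity
  simp only [sigmaF, neg_neg]
  rw [eq_sub_iff_add_eq, div_add_div _ _ (ne_of_gt h2) (ne_of_gt h1), div_eq_one_iff_eq (by positivity)]
  rw [Real.exp_neg]
  have h := (Real.exp_pos x).ne'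
  field_simp
  ring

lemma pow4_le_exp {x : ℝ} (hx : 0 ≤ x) : x ^ 4 ≤ 256 * Real.exp x := by
  have h := Real.add_one_le_exp (x / 4)
  have h2 : Real.exp x = (Real.exp (x/4)) ^ 4 := by
    rw [← Real.exp_nat_mul]; congr 1; push_cast; ring
  have h3 : (x/4) ^ 4 ≤ (Real.exp (x/4)) ^ 4 :=
    pow_le_pow_left₀ (by positivity) (by linarith) 4
  nlinarith [h3]

lemma one_add_sq_le_four_exp (x : ℝ) (hx : 0 ≤ x) : x ^ 2 + 1 ≤ 4 * Real.exp x := by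
  have h := Real.add_one_le_exp (x / 2)
  have h2 : Real.exp x = (Real.exp (x/2)) ^ 2 := by
    rw [← Real.exp_nat_mul]; congr 1; push_cast; ring
  have h3 : (x/2 + 1) ^ 2 ≤ (Real.exp (x/2)) ^ 2 :=
    pow_le_pow_left₀ (by positivity) (by linarith) 2
  nlinarith [h3]

lemma ftc_xexp {r b : ℝ} (hr : 0 < r) (hb : 0 ≤ b) :
    ∫ x in (0:ℝ)..b, x * Real.exp (-(r*x)) ≤ 1 / r ^ 2 := by
  have hrne := hr.ne'
  have hderiv : ∀ x ∈ Set.uIcc (0:ℝ) b, HasDerivAt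
      (fun x => -((x/r + 1/r^2) * Real.exp (-(r*x)))) (x * Real.exp (-(r*x))) x := by
    intro x _
    have h1 : HasDerivAt (fun x : ℝ => x/r + 1/r^2) (1/r) x :=
      ((hasDerivAt_id x).div_const r).add_const _
    have h2 : HasDerivAt (fun x : ℝ => Real.exp (-(r*x))) (-r * Real.exp (-(r*x))) x := by
      have h3 : HasDerivAt (fun x : ℝ => -(r*x)) (-r) x := by
        have := ((hasDerivAt_id x).const_mul r).neg; simp only [id, mul_one] at this; exact this
      simpa [mul_comm, Function.comp_def] using (Real.hasDerivAt_exp (-(r*x))).comp x h3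
    have h4 : HasDerivAt (fun x => -((x/r + 1/r^2) * Real.exp (-(r*x))))
        (-(1/r * Real.exp (-(r*x)) + (x/r + 1/r^2) * (-r * Real.exp (-(r*x))))) x := (h1.mul h2).neg
    convert h4 using 1
    field_simp
    ring
  have hInt : IntervalIntegrable (fun x => x * Real.exp (-(r*x))) volume 0 b := by
    apply Continuous.intervalIntegrable
    continuity
  rw [intervalIntegral.integral_eq_sub_of_hasDerivAt hderiv hInt]
  have hnn : 0 ≤ (b/r + 1/r^2) * Real.exp (-(r*b)) := by positivity
  simp only [mul_zero, neg_zero, Real.exp_zero, zero_div, zero_add, mul_one]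
  linarith

lemma ae_ne_zero : ∀ᵐ x : ℝ, x ≠ 0 := by
  rw [MeasureTheory.ae_iff]
  simp only [ne_eq, not_not]
  simpa using Real.volume_singleton (a := (0:ℝ))

lemma odd_integral_zero {r δ : ℝ} (hδ : 0 < δ) :
    ∫ x in Set.Ioo (-δ) δ, (sigmaF (r*x) - stepF x) = 0 := by
  rw [← integral_Ioc_eq_integral_Ioo, ← intervalIntegral.integral_of_le (by linarith : -δ ≤ δ)]
  set q : ℝ → ℝ := fun x => sigmaF (r*x) - stepF x with hq
  have h1 : ∫ x in (-δ)..δ, q (-x) = ∫ x in (-δ)..δ, q x := by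
    rw [intervalIntegral.integral_comp_neg q, neg_neg]
  have h2 : ∫ x in (-δ)..δ, q (-x) = - ∫ x in (-δ)..δ, q x := by
    rw [← intervalIntegral.integral_neg]
    apply intervalIntegral.integral_congr_ae
    filter_upwards [ae_ne_zero] with x hx _
    simp only [hq, mul_neg, sigmaF_neg, stepF_neg hx]
    ring
  linarith
lemma continuous_sigmaF : Continuous sigmaF := by
  apply Continuous.div continuous_const
  · continuity
  · intro x; positivity

lemma measurable_stepF : Measurable stepF := by
  unfold stepF
  exact Measurable.ite (measurableSet_lt measurable_const measurable_id) measurable_const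
    measurable_const

lemma psi_integral_le {r δ : ℝ} (hr : 0 < r) (hδ : 0 < δ) :
    ∫ x in Set.Ioo (-δ) δ, |x| * Real.exp (-(r*|x|)) ≤ 2/r^2 := by
  have hψc : Continuous (fun x : ℝ => |x| * Real.exp (-(r*|x|))) :=
    continuous_abs.mul (Real.continuous_exp.comp ((continuous_const.mul continuous_abs).neg))
  have hI : ∀ a b : ℝ, IntervalIntegrable (fun x : ℝ => |x| * Real.exp (-(r*|x|))) volume a b :=
    fun a b => hψc.intervalIntegrable a b
  rw [← integral_Ioc_eq_integral_Ioo, ← intervalIntegral.integral_of_le (by linarith : -δ ≤ δ)]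
  rw [← intervalIntegral.integral_add_adjacent_intervals (hI (-δ) 0) (hI 0 δ)]
  have h1 := intervalIntegral.integral_comp_neg (a := (0:ℝ)) (b := δ)
    (fun x => |x| * Real.exp (-(r*|x|)))
  simp only [abs_neg, neg_zero] at h1
  have hcong : ∫ x in (0:ℝ)..δ, |x| * Real.exp (-(r*|x|))
      = ∫ x in (0:ℝ)..δ, x * Real.exp (-(r*x)) := by
    apply intervalIntegral.integral_congr
    intro x hx
    rw [Set.uIcc_of_le (by linarith : (0:ℝ) ≤ δ)] at hx
    show |x| * Real.exp (-(r*|x|)) = x * Real.exp (-(r*x))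
    rw [abs_of_nonneg hx.1]
  have hftc := ftc_xexp hr (le_of_lt hδ)
  rw [← h1, hcong]
  have : 2/r^2 = 1/r^2 + 1/r^2 := by ring
  linarith

set_option maxHeartbeats 1000000 in
theorem step_approximation (F : ℝ → ℝ) (hFmeas : Measurable F) (c₁ c₂ δ : ℝ)
    (hδ : 0 < δ)
    (hint : MeasureTheory.Integrable (fun ξ : ℝ => |F ξ| / (ξ ^ 2 + 1)))
    (hc₂ : ∫ ξ : ℝ, |F ξ| / (ξ ^ 2 + 1) ≤ c₂)
    (hLip : ∀ ξ : ℝ, |ξ| < δ → |F ξ - F 0| ≤ c₁ * |ξ|) :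
    ∃ C r₀ : ℝ, 0 < C ∧ 0 < r₀ ∧ ∀ r : ℝ, r₀ ≤ r →
      |(∫ ξ : ℝ, F ξ * sigmaF (r * ξ)) - ∫ ξ in Set.Ioi (0:ℝ), F ξ| ≤ C / r ^ 2 := by
  have hc₂0 : 0 ≤ c₂ := le_trans (integral_nonneg (fun x => by positivity)) hc₂
  have hc₁0 : 0 ≤ c₁ := by
    have habs : |δ/2| = δ/2 := abs_of_pos (by linarith)
    have h := hLip (δ/2) (by rw [habs]; linarith)
    rw [habs] at h
    nlinarith [abs_nonneg (F (δ/2) - F 0)]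
  set K : ℝ := 256 * (1/δ^2 + 1/δ^4) with hKdef
  have hK0 : 0 < K := by positivity
  have hC0 : 0 < 2*c₁ + K*c₂ + 1 := by nlinarith
  refine ⟨2*c₁ + K*c₂ + 1, 1, hC0, one_pos, fun r hr => ?_⟩
  have hr0 : (0:ℝ) < r := lt_of_lt_of_le one_pos hr
  set h : ℝ → ℝ := fun x => F x * (sigmaF (r*x) - stepF x) with hh
  have hsig_bd : ∀ x : ℝ, |sigmaF (r*x) - stepF x| ≤ Real.exp (-(r * |x|)) := by
    intro x
    have hstep : stepF x = stepF (r*x) := by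
      by_cases hx : 0 < x
      · simp [stepF, hx, mul_pos hr0 hx]
      · have hx' : ¬ 0 < r * x :=
          not_lt.mpr (by nlinarith [not_lt.mp hx])
        simp [stepF, hx, hx']
    rw [hstep]
    have hb := sigmaF_abs_le (r*x)
    rwa [abs_mul, abs_of_pos hr0] at hb
  have hbd : ∀ x : ℝ, |h x| ≤ |F x| * Real.exp (-(r * |x|)) := by
    intro x
    rw [hh, abs_mul]
    exact mul_le_mul_of_nonneg_left (hsig_bd x) (abs_nonneg _)
  have hmeas_h : Measurable h := by
    apply hFmeas.mul
    exact ((continuous_sigmaF.measurable).comp (measurable_const.mul measurable_id)).sub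
      measurable_stepF
  have hInt_h : Integrable h := by
    apply Integrable.mono (hint.const_mul 4) hmeas_h.aestronglyMeasurable
    filter_upwards with x
    rw [Real.norm_eq_abs, Real.norm_eq_abs]
    have h1 : Real.exp (-(r*|x|)) ≤ Real.exp (-|x|) :=
      Real.exp_le_exp.mpr (by nlinarith [abs_nonneg x])
    have h2 : Real.exp (-|x|) ≤ 4/(x^2+1) := by
      rw [le_div_iff₀ (by positivity : (0:ℝ) < x^2+1)]
      have h3 := one_add_sq_le_four_exp |x| (abs_nonneg x)
      have h4 : Real.exp (-|x|) * Real.exp |x| = 1 := by rw [← Real.exp_add]; simp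
      nlinarith [Real.exp_pos (-|x|), sq_abs x]
    calc |h x| ≤ |F x| * Real.exp (-(r*|x|)) := hbd x
      _ ≤ |F x| * (4/(x^2+1)) := by
          apply mul_le_mul_of_nonneg_left _ (abs_nonneg _)
          linarith
      _ = 4 * (|F x|/(x^2+1)) := by ring
      _ ≤ |4 * (|F x|/(x^2+1))| := le_abs_self _
  have hIoi_eq : (fun x => F x * stepF x) = (Set.Ioi (0:ℝ)).indicator F := stepF_mul F
  by_cases hFi : IntegrableOn F (Set.Ioi 0) volume
  swap
  · have h1 : ¬ Integrable (fun ξ : ℝ => F ξ * sigmaF (r*ξ)) := by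
      intro hcon
      have h2 : Integrable (fun x => F x * stepF x) := by
        have heq : (fun x => F x * stepF x) = fun x => (F x * sigmaF (r*x)) - h x := by
          funext x; rw [hh]; ring
        rw [heq]; exact hcon.sub hInt_h
      rw [hIoi_eq] at h2
      exact hFi ((integrable_indicator_iff measurableSet_Ioi).mp h2)
    rw [integral_undef h1, integral_undef hFi]
    simp only [sub_zero, abs_zero]
    positivity
  have hstep_int : Integrable (fun x => F x * stepF x) := by
    rw [hIoi_eq]; exact (integrable_indicator_iff measurableSet_Ioi).mpr hFi
  have hsig_int : Integrable (fun ξ : ℝ => F ξ * sigmaF (r*ξ)) := by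
    have heq : (fun ξ : ℝ => F ξ * sigmaF (r*ξ)) = fun x => h x + F x * stepF x := by
      funext x; rw [hh]; ring
    rw [heq]; exact hInt_h.add hstep_int
  have hkey : (∫ ξ : ℝ, F ξ * sigmaF (r*ξ)) - ∫ ξ in Set.Ioi (0:ℝ), F ξ = ∫ x, h x := by
    rw [← integral_indicator measurableSet_Ioi, ← hIoi_eq,
      ← integral_sub hsig_int hstep_int]
    congr 1; funext x; rw [hh]; ring
  rw [hkey]
  set s : Set ℝ := Set.Ioo (-δ) δ with hs
  have hsm : MeasurableSet s := measurableSet_Ioo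
  have hsplit : ∫ x, h x = (∫ x in s, h x) + ∫ x in sᶜ, h x :=
    (integral_add_compl hsm hInt_h).symm
  have hOuter : |∫ x in sᶜ, h x| ≤ K * c₂ / r^2 := by
    have hb : ∀ x ∈ sᶜ, |h x| ≤ (K/r^2) * (|F x| / (x^2+1)) := by
      intro x hx
      have hdx : δ ≤ |x| := by
        rw [hs] at hx
        simp only [Set.mem_compl_iff, Set.mem_Ioo, not_and_or, not_lt] at hx
        rcases hx with h' | h'
        · rw [abs_of_nonpos (by linarith)]; linarith
        · rw [abs_of_nonneg (by linarith)]; linarith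
      have hx0 : 0 < |x| := lt_of_lt_of_le hδ hdx
      have h1 := pow4_le_exp (show (0:ℝ) ≤ r*|x| by positivity)
      have h2 : Real.exp (-(r*|x|)) * Real.exp (r*|x|) = 1 := by rw [← Real.exp_add]; simp
      have hx4 : (0:ℝ) < (r*|x|)^4 := by positivity
      have hE : Real.exp (-(r*|x|)) ≤ 256 / (r*|x|)^4 := by
        rw [le_div_iff₀ hx4]
        nlinarith [Real.exp_pos (-(r*|x|))]
      have habs4 : (r*|x|)^4 = r^4 * x^4 := by
        rw [mul_pow, pow_abs, abs_of_nonneg (by positivity : (0:ℝ) ≤ x^4)]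
      have hd2 : δ^2 ≤ x^2 := by nlinarith [sq_abs x]
      have e1 : x^2 ≤ x^4 / δ^2 := by
        rw [le_div_iff₀ (by positivity : (0:ℝ) < δ^2)]; nlinarith
      have e2 : (1:ℝ) ≤ x^4 / δ^4 := by
        rw [le_div_iff₀ (by positivity : (0:ℝ) < δ^4)]; nlinarith
      have e3 : x^2 + 1 ≤ (1/δ^2 + 1/δ^4) * x^4 := by
        have heq : (1/δ^2 + 1/δ^4) * x^4 = x^4/δ^2 + x^4/δ^4 := by ring
        rw [heq]; linarith
      have hr2 : r^2 ≤ r^4 := by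
        have h1 : 1 ≤ r^2 := by nlinarith
        nlinarith [mul_nonneg (sq_nonneg r) (sub_nonneg.mpr h1)]
      have hmono : 256 / (r*|x|)^4 ≤ K / (r^2 * (x^2+1)) := by
        rw [div_le_div_iff₀ hx4 (by positivity : (0:ℝ) < r^2 * (x^2+1)), habs4, hKdef]
        have step1 : r^2*(x^2+1) ≤ r^4*(x^2+1) :=
          mul_le_mul_of_nonneg_right hr2 (by positivity)
        have step2 : r^4*(x^2+1) ≤ r^4*((1/δ^2+1/δ^4)*x^4) :=
          mul_le_mul_of_nonneg_left e3 (by positivity)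
        calc 256 * (r^2*(x^2+1)) ≤ 256 * (r^4*((1/δ^2+1/δ^4)*x^4)) := by linarith
          _ = 256*(1/δ^2+1/δ^4) * (r^4*x^4) := by ring
      have hexp : Real.exp (-(r*|x|)) ≤ K / (r^2 * (x^2+1)) := le_trans hE hmono
      calc |h x| ≤ |F x| * Real.exp (-(r*|x|)) := hbd x
        _ ≤ |F x| * (K / (r^2 * (x^2+1))) :=
            mul_le_mul_of_nonneg_left hexp (abs_nonneg _)
        _ = (K/r^2) * (|F x| / (x^2+1)) := by
            field_simp
    calc |∫ x in sᶜ, h x| ≤ ∫ x in sᶜ, |h x| := by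
          exact_mod_cast norm_integral_le_integral_norm (μ := volume.restrict sᶜ) h
      _ ≤ ∫ x in sᶜ, (K/r^2) * (|F x| / (x^2+1)) :=
          setIntegral_mono_on (hInt_h.abs.integrableOn)
            ((hint.const_mul (K/r^2)).integrableOn) hsm.compl hb
      _ = (K/r^2) * ∫ x in sᶜ, |F x|/(x^2+1) := integral_const_mul _ _
      _ ≤ (K/r^2) * c₂ := by
          apply mul_le_mul_of_nonneg_left _ (by positivity)
          refine le_trans (setIntegral_le_integral hint ?_) hc₂
          filter_upwards with x using by positivity
      _ = K * c₂ / r^2 := by ring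
  have hInner : |∫ x in s, h x| ≤ 2*c₁ / r^2 := by
    set B : ℝ → ℝ := fun x => F 0 * (sigmaF (r*x) - stepF x) with hB
    set A : ℝ → ℝ := fun x => (F x - F 0) * (sigmaF (r*x) - stepF x) with hA
    have hsfin : volume s ≠ ⊤ := by
      rw [hs, Real.volume_Ioo]; exact ENNReal.ofReal_ne_top
    have hBmeas : Measurable B := by
      apply Measurable.const_mul
      exact ((continuous_sigmaF.measurable).comp (measurable_const.mul measurable_id)).sub
        measurable_stepF
    have hBint : IntegrableOn B s := by
      apply Measure.integrableOn_of_bounded hsfin hBmeas.aestronglyMeasurable (M := |F 0|)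
      filter_upwards with x
      rw [hB, Real.norm_eq_abs, abs_mul]
      have h1 : |sigmaF (r*x) - stepF x| ≤ 1 :=
        le_trans (hsig_bd x) (Real.exp_le_one_iff.mpr (neg_nonpos.mpr (by positivity)))
      exact mul_le_of_le_one_right (abs_nonneg _) h1
    have hAint : IntegrableOn A s := by
      have heq : A = fun x => h x - B x := by funext x; rw [hA, hB, hh]; ring
      rw [heq]; exact (hInt_h.integrableOn).sub hBint
    have hsum : ∫ x in s, h x = (∫ x in s, A x) + ∫ x in s, B x := by
      rw [← integral_add hAint hBint]
      congr 1; funext x; rw [hA, hB, hh]; ring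
    have hBzero : ∫ x in s, B x = 0 := by
      rw [hB]
      rw [integral_const_mul]
      rw [hs, odd_integral_zero hδ, mul_zero]
    have hψint : IntegrableOn (fun x : ℝ => c₁ * (|x| * Real.exp (-(r*|x|)))) s := by
      have hψc : Continuous (fun x : ℝ => c₁ * (|x| * Real.exp (-(r*|x|)))) :=
        continuous_const.mul (continuous_abs.mul
          (Real.continuous_exp.comp ((continuous_const.mul continuous_abs).neg)))
      exact (hψc.integrableOn_Icc (a := -δ) (b := δ)).mono_set Set.Ioo_subset_Icc_self
    have hAb : ∀ x ∈ s, |A x| ≤ c₁ * (|x| * Real.exp (-(r*|x|))) := by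
      intro x hx
      rw [hs, Set.mem_Ioo] at hx
      have hxd : |x| < δ := abs_lt.mpr hx
      rw [hA, abs_mul]
      calc |F x - F 0| * |sigmaF (r*x) - stepF x| ≤ (c₁*|x|) * Real.exp (-(r*|x|)) :=
            mul_le_mul (hLip x hxd) (hsig_bd x) (abs_nonneg _) (by positivity)
        _ = c₁ * (|x| * Real.exp (-(r*|x|))) := by ring
    have hAbound : |∫ x in s, A x| ≤ c₁ * (2/r^2) := by
      calc |∫ x in s, A x| ≤ ∫ x in s, |A x| := by
            exact_mod_cast norm_integral_le_integral_norm (μ := volume.restrict s) A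
        _ ≤ ∫ x in s, c₁ * (|x| * Real.exp (-(r*|x|))) :=
            setIntegral_mono_on hAint.abs hψint hsm hAb
        _ = c₁ * ∫ x in s, |x| * Real.exp (-(r*|x|)) := integral_const_mul _ _
        _ ≤ c₁ * (2/r^2) := by
            apply mul_le_mul_of_nonneg_left _ hc₁0
            rw [hs]; exact psi_integral_le hr0 hδ
    rw [hsum, hBzero, add_zero]
    calc |∫ x in s, A x| ≤ c₁ * (2/r^2) := hAbound
      _ = 2*c₁/r^2 := by ring
  calc |∫ x, h x| = |(∫ x in s, h x) + ∫ x in sᶜ, h x| := by rw [← hsplit]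
    _ ≤ |∫ x in s, h x| + |∫ x in sᶜ, h x| := abs_add_le _ _
    _ ≤ 2*c₁/r^2 + K*c₂/r^2 := add_le_add hInner hOuter
    _ ≤ (2*c₁ + K*c₂ + 1)/r^2 := by
        have h1 : (0:ℝ) ≤ 1/r^2 := by positivity
        have heq : (2*c₁+K*c₂+1)/r^2 = 2*c₁/r^2 + K*c₂/r^2 + 1/r^2 := by ring
        linarith
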